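/- Let l ∈ ℤ, let k ∈ ℕ, and let f : ℍ → ℂ be holomorphic. Then for all τ = x+iy ∈ ℍ, R_l^k(f)(τ) = Σ_{r=0}^k (−1)^{k−r} · C(k,r) · (l+r)_{k−r} · (4πy)^{r−k} · f^{(r)}(τ), where (a)_m := a(a+1)⋯(a+m−1) is the Pochhammer symbol and C(k,r) the binomial coefficient. -/

import Mathlib

noncomputable section

open Complex Real

/-- The upper half-plane, as a subset of `ℂ`. -/
def UHP : Set ℂ := {z : ℂ | 0 < z.im}

/-- `e(z) = exp(2πiz)`. -/
def e (z : ℂ) : ℂ := Complex.exp (2 * (π : ℂ) * I * z)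

/-- The Wirtinger derivative `∂f/∂τ = (1/2)(∂f/∂x − i ∂f/∂y)`. -/
def dtau (f : ℂ → ℂ) (z : ℂ) : ℂ := (fderiv ℝ f z 1 - I * fderiv ℝ f z I) / 2

/-- The raising operator `R_w f = (1/(2πi)) (∂f/∂τ + w f/(τ − τ̄))`. -/
def Rop (w : ℤ) (f : ℂ → ℂ) : ℂ → ℂ :=
  fun z => (1 / (2 * (π : ℂ) * I)) * (dtau f z + (w : ℂ) * f z / (z - (starRingEnd ℂ) z))

/-- Iterated raising operator: `R_w^0 = id`, `R_w^{n+1} = R_{w+2n} ∘ R_w^n`. -/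
def Riter (w : ℤ) : ℕ → (ℂ → ℂ) → (ℂ → ℂ)
  | 0 => fun f => f
  | n + 1 => fun f => Rop (w + 2 * n) (Riter w n f)

/-- Normalized derivative `f^{(r)} = (2πi)^{−r} d^r f/dτ^r`. -/
def fder (r : ℕ) (f : ℂ → ℂ) : ℂ → ℂ :=
  fun z => ((2 * (π : ℂ) * I) ^ r)⁻¹ * iteratedDeriv r f z

/-- The Rankin–Cohen bracket of `f` and `g` with weight parameters `k`, `l`:
`[f,g]_r = Σ_{s=0}^r (−1)^s C(k+r−1,s) C(l+r−1,r−s) f^{(r−s)} g^{(s)}`. -/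
def RCbracket (k l r : ℕ) (f g : ℂ → ℂ) : ℂ → ℂ :=
  fun z => ∑ s ∈ Finset.range (r + 1),
    (-1 : ℂ) ^ s * (Nat.choose (k + r - 1) s : ℂ) * (Nat.choose (l + r - 1) (r - s) : ℂ) *
      fder (r - s) f z * fder s g z

/-! ### Auxiliary lemmas -/

lemma isOpen_UHP : IsOpen UHP := isOpen_lt continuous_const Complex.continuous_im

lemma dtau_eq_deriv {f : ℂ → ℂ} {z : ℂ} (hf : DifferentiableAt ℂ f z) :
    dtau f z = deriv f z := by
  have h : fderiv ℝ f z = (fderiv ℂ f z).restrictScalars ℝ :=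
    (hf.hasFDerivAt.restrictScalars ℝ).fderiv
  have h1 : fderiv ℂ f z 1 = deriv f z := by simp [fderiv_apply_one_eq_deriv]
  have hI : fderiv ℂ f z I = I * deriv f z := by
    have := (fderiv ℂ f z).map_smul I (1:ℂ)
    simp [smul_eq_mul] at this
    simp [this, h1]
  simp only [dtau, h, ContinuousLinearMap.coe_restrictScalars', h1, hI]
  ring_nf
  simp [Complex.I_sq]
  ring

lemma dtau_mul {f g : ℂ → ℂ} {z : ℂ} (hf : DifferentiableAt ℝ f z)
    (hg : DifferentiableAt ℝ g z) :
    dtau (fun w => f w * g w) z = dtau f z * g z + f z * dtau g z := by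
  have h := fderiv_fun_mul hf hg
  simp only [dtau, h, ContinuousLinearMap.add_apply, ContinuousLinearMap.smul_apply,
    smul_eq_mul]
  ring

lemma dtau_const_mul (c : ℂ) {f : ℂ → ℂ} {z : ℂ} (hf : DifferentiableAt ℝ f z) :
    dtau (fun w => c * f w) z = c * dtau f z := by
  have h := fderiv_const_mul hf c
  simp only [dtau, h, ContinuousLinearMap.smul_apply, smul_eq_mul]
  ring

lemma hasFDerivAt_imc (z : ℂ) :
    HasFDerivAt (fun w : ℂ => ((w.im : ℝ) : ℂ)) (ofRealCLM.comp imCLM) z :=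
  (ofRealCLM.comp imCLM).hasFDerivAt

lemma diff_impow (m : ℤ) {z : ℂ} (hz : z.im ≠ 0) :
    HasFDerivAt (fun w : ℂ => ((w.im : ℝ) : ℂ) ^ m)
      (((m : ℂ) * ((z.im : ℝ) : ℂ) ^ (m - 1)) • (ofRealCLM.comp imCLM : ℂ →L[ℝ] ℂ)) z := by
  have h1 : HasDerivAt (fun w : ℂ => w ^ m) ((m : ℂ) * ((z.im : ℝ) : ℂ) ^ (m - 1))
      ((z.im : ℝ) : ℂ) := hasDerivAt_zpow m _ (Or.inl (by exact_mod_cast hz))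
  exact h1.comp_hasFDerivAt z (hasFDerivAt_imc z)

lemma dtau_impow (m : ℤ) {z : ℂ} (hz : z.im ≠ 0) :
    dtau (fun w : ℂ => ((w.im : ℝ) : ℂ) ^ m) z
      = -(I / 2) * (m : ℂ) * ((z.im : ℝ) : ℂ) ^ (m - 1) := by
  have h := (diff_impow m hz).fderiv
  simp only [dtau, h, ContinuousLinearMap.smul_apply, ContinuousLinearMap.comp_apply,
    smul_eq_mul]
  simp
  ring

lemma dtau_sum {s : Finset ℕ} {F : ℕ → ℂ → ℂ} {z : ℂ}
    (h : ∀ i ∈ s, DifferentiableAt ℝ (F i) z) :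
    dtau (fun w => ∑ i ∈ s, F i w) z = ∑ i ∈ s, dtau (F i) z := by
  have hfd := fderiv_fun_sum h
  simp only [dtau, hfd, ContinuousLinearMap.sum_apply, Finset.mul_sum, ← Finset.sum_sub_distrib,
    Finset.sum_div]

lemma dtau_congr {f g : ℂ → ℂ} {z : ℂ} (h : f =ᶠ[nhds z] g) : dtau f z = dtau g z := by
  simp only [dtau, h.fderiv_eq]

lemma analyticAt_iteratedDeriv {f : ℂ → ℂ} (hf : DifferentiableOn ℂ f UHP) (r : ℕ) :
    ∀ z ∈ UHP, AnalyticAt ℂ (iteratedDeriv r f) z := by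
  induction r with
  | zero =>
    intro z hz
    simpa using hf.analyticAt (isOpen_UHP.mem_nhds hz)
  | succ n ih =>
    intro z hz
    rw [iteratedDeriv_succ]
    exact AnalyticOnNhd.deriv (fun w hw => ih w hw) z hz

lemma two_pi_I_ne : (2 * (π : ℂ) * I) ≠ 0 := by
  simp [Real.pi_ne_zero, I_ne_zero, Complex.ofReal_ne_zero]

lemma deriv_fder {f : ℂ → ℂ} (hf : DifferentiableOn ℂ f UHP) (r : ℕ) {z : ℂ} (hz : z ∈ UHP) :
    deriv (fder r f) z = (2 * (π : ℂ) * I) * fder (r + 1) f z := by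
  have hd : DifferentiableAt ℂ (iteratedDeriv r f) z :=
    (analyticAt_iteratedDeriv hf r z hz).differentiableAt
  have h1 : deriv (fun w => ((2 * (π : ℂ) * I) ^ r)⁻¹ * iteratedDeriv r f w) z
      = ((2 * (π : ℂ) * I) ^ r)⁻¹ * deriv (iteratedDeriv r f) z := deriv_const_mul _ hd
  have h0 : fder r f = fun w => ((2 * (π : ℂ) * I) ^ r)⁻¹ * iteratedDeriv r f w := rfl
  rw [h0, h1, ← iteratedDeriv_succ, fder, pow_succ, mul_inv]
  field_simp [two_pi_I_ne]

lemma diffC_fder {f : ℂ → ℂ} (hf : DifferentiableOn ℂ f UHP) (r : ℕ) {z : ℂ} (hz : z ∈ UHP) :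
    DifferentiableAt ℂ (fder r f) z :=
  ((analyticAt_iteratedDeriv hf r z hz).differentiableAt.const_mul _ : DifferentiableAt ℂ _ z)

lemma perterm {f : ℂ → ℂ} (hf : DifferentiableOn ℂ f UHP) {z : ℂ} (hz : z ∈ UHP)
    (c : ℂ) (r : ℕ) (m : ℤ) (w : ℤ) :
    (1 / (2 * (π:ℂ) * I)) * (dtau (fun u => c * (4*(π:ℂ)*((u.im:ℝ):ℂ))^m * fder r f u) z
        + (w:ℂ) * (c * (4*(π:ℂ)*((z.im:ℝ):ℂ))^m * fder r f z) / (z - (starRingEnd ℂ) z))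
    = c * (4*(π:ℂ)*((z.im:ℝ):ℂ))^m * fder (r+1) f z
      + (-((w:ℂ) + m)) * c * (4*(π:ℂ)*((z.im:ℝ):ℂ))^(m-1) * fder r f z := by
  have hy : z.im ≠ 0 := ne_of_gt hz
  set Y : ℂ := ((z.im:ℝ):ℂ) with hYdef
  have hY : Y ≠ 0 := by simpa [hYdef, Complex.ofReal_ne_zero] using hy
  have hpi : (π:ℂ) ≠ 0 := by exact_mod_cast Real.pi_ne_zero
  have hfun : (fun u => c * (4*(π:ℂ)*((u.im:ℝ):ℂ))^m * fder r f u)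
      = fun u => (c * (4*(π:ℂ))^m) * (((u.im:ℝ):ℂ)^m * fder r f u) := by
    funext u; rw [mul_zpow]; ring
  have himp : DifferentiableAt ℝ (fun u : ℂ => ((u.im:ℝ):ℂ)^m) z :=
    (diff_impow m hy).differentiableAt
  have hfd : DifferentiableAt ℝ (fder r f) z := (diffC_fder hf r hz).restrictScalars ℝ
  have hd : dtau (fun u => c * (4*(π:ℂ)*((u.im:ℝ):ℂ))^m * fder r f u) z
      = (c * (4*(π:ℂ))^m) * ((-(I/2) * (m:ℂ) * Y^(m-1)) * fder r f z
          + Y^m * ((2 * (π:ℂ) * I) * fder (r+1) f z)) := by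
    rw [hfun, dtau_const_mul _ (himp.fun_mul hfd), dtau_mul himp hfd, dtau_impow m hy,
      dtau_eq_deriv (diffC_fder hf r hz), deriv_fder hf r hz]
  rw [hd, Complex.sub_conj]
  have hconj : (((2 * z.im : ℝ)):ℂ) * I = 2 * Y * I := by rw [hYdef]; push_cast; ring
  have hYm : Y^m = Y^(m-1) * Y := by
    rw [zpow_sub_one₀ hY]; field_simp
  have hBm : (4*(π:ℂ)*Y)^m = (4*(π:ℂ))^m * Y^m := mul_zpow _ _ _
  have hBm1 : (4*(π:ℂ)*Y)^(m-1) = (4*(π:ℂ))^(m-1) * Y^(m-1) := mul_zpow _ _ _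
  have hpm : (4*(π:ℂ))^m = (4*(π:ℂ))^(m-1) * (4*(π:ℂ)) := by
    rw [zpow_sub_one₀ (by simp [hpi] : (4*(π:ℂ)) ≠ 0)]; field_simp
  rw [hconj, hBm, hBm1, hYm, hpm]
  set a := (4*(π:ℂ))^(m-1) with ha
  set b := Y^(m-1) with hb
  simp only [one_div, div_eq_mul_inv, mul_inv, Complex.inv_I]
  field_simp [hY, hpi]
  ring_nf
  simp only [Complex.I_sq]
  ring

lemma coeffid (L : ℂ) (s t : ℕ) :
    (-1:ℂ)^(t+1) * ((s+t+2).choose (s+1) : ℂ) * ∏ i ∈ Finset.range (t+1), (L + ((s:ℕ)+1) + i)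
      = (-1:ℂ)^(t+1) * ((s+t+1).choose s : ℂ) * ∏ i ∈ Finset.range (t+1), (L + (s:ℕ) + i)
        + (-(L + ((s:ℕ)+1+t) + ((s:ℕ)+1))) *
          ((-1:ℂ)^t * ((s+t+1).choose (s+1) : ℂ) * ∏ i ∈ Finset.range t, (L + ((s:ℕ)+1) + i)) := by
  have hpas : ((s+t+2).choose (s+1) : ℂ) = ((s+t+1).choose s : ℂ) + ((s+t+1).choose (s+1) : ℂ) := by
    rw [show s+t+2 = (s+t+1)+1 by ring, Nat.choose_succ_succ']; push_cast; ring
  have hrec : ((s+t+1).choose (s+1) : ℂ) * (s+1) = ((s+t+1).choose s : ℂ) * (t+1) := by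
    have := Nat.choose_succ_right_eq (s+t+1) s
    rw [show s+t+1-s = t+1 by omega] at this
    exact_mod_cast this
  have h1 : ∏ i ∈ Finset.range (t+1), (L + ((s:ℕ)+1) + i)
      = (∏ i ∈ Finset.range t, (L + ((s:ℕ)+1) + i)) * (L + (s+1) + t) := by
    rw [Finset.prod_range_succ]
  have h2 : ∏ i ∈ Finset.range (t+1), (L + (s:ℕ) + i)
      = (∏ i ∈ Finset.range t, (L + ((s:ℕ)+1) + i)) * (L + s) := by
    rw [Finset.prod_range_succ']
    congr 1
    · apply Finset.prod_congr rfl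
      intro i _
      push_cast; ring
    · simp
  rw [h1, h2, hpas, pow_succ]
  set P := ∏ i ∈ Finset.range t, (L + ((s:ℕ)+1) + i)
  set a := ((s+t+1).choose s : ℂ)
  set b := ((s+t+1).choose (s+1) : ℂ)
  linear_combination ((-1:ℂ)^t * P) * hrec

lemma stepsum (l : ℤ) (k : ℕ) (B : ℂ) (F : ℕ → ℂ) :
    ∑ r ∈ Finset.range (k+1),
      ((-1:ℂ)^(k-r) * (k.choose r : ℂ) * (∏ i ∈ Finset.range (k-r), ((l:ℂ) + r + i)) *
          B ^ ((r:ℤ) - (k:ℤ)) * F (r+1)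
        + (-(((l:ℂ) + 2*(k:ℂ)) + ((r:ℂ) - (k:ℂ)))) *
          ((-1:ℂ)^(k-r) * (k.choose r : ℂ) * (∏ i ∈ Finset.range (k-r), ((l:ℂ) + r + i))) *
          B ^ ((r:ℤ) - (k:ℤ) - 1) * F r)
    = ∑ r ∈ Finset.range (k+2),
        (-1:ℂ)^(k+1-r) * ((k+1).choose r : ℂ) * (∏ i ∈ Finset.range (k+1-r), ((l:ℂ) + r + i)) *
          B ^ ((r:ℤ) - (k:ℤ) - 1) * F r := by
  have hsplit : ∀ r ∈ Finset.range (k+2),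
      (-1:ℂ)^(k+1-r) * ((k+1).choose r : ℂ) * (∏ i ∈ Finset.range (k+1-r), ((l:ℂ) + r + i)) *
          B ^ ((r:ℤ) - (k:ℤ) - 1) * F r
        = (if r = 0 then 0 else
            (-1:ℂ)^(k-(r-1)) * (k.choose (r-1) : ℂ) *
              (∏ i ∈ Finset.range (k-(r-1)), ((l:ℂ) + (r-1:ℕ) + i)) *
              B ^ ((r:ℤ) - (k:ℤ) - 1) * F r)
          + (if r ≤ k then
              (-(((l:ℂ) + 2*(k:ℂ)) + ((r:ℂ) - (k:ℂ)))) *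
                ((-1:ℂ)^(k-r) * (k.choose r : ℂ) * (∏ i ∈ Finset.range (k-r), ((l:ℂ) + r + i))) *
                B ^ ((r:ℤ) - (k:ℤ) - 1) * F r
            else 0) := by
    intro r hr
    simp only [Finset.mem_range] at hr
    match r with
    | 0 =>
      rw [if_pos rfl, if_pos (Nat.zero_le k), zero_add]
      rw [Nat.sub_zero, Nat.sub_zero, Finset.prod_range_succ]
      push_cast
      rw [pow_succ]
      simp [Nat.choose_zero_right]
      ring
    | (s+1) =>
      rw [if_neg (Nat.succ_ne_zero s), Nat.succ_sub_one]
      by_cases hs : s + 1 ≤ k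
      · rw [if_pos hs]
        obtain ⟨t, rfl⟩ : ∃ t, k = s + 1 + t := ⟨k - (s+1), by omega⟩
        have h1 : s + 1 + t + 1 - (s + 1) = t + 1 := by omega
        have h2 : s + 1 + t - s = t + 1 := by omega
        have h3 : s + 1 + t - (s + 1) = t := by omega
        have h4 : s + 1 + t + 1 = s + t + 2 := by omega
        have h5 : s + 1 + t = s + t + 1 := by omega
        rw [h1, h2, h3, h4, h5]
        have hc := coeffid (l:ℂ) s t
        push_cast at hc ⊢
        simp only [show (s:ℤ)+1-((s:ℤ)+(t:ℤ)+1)-1 = -(t:ℤ)-1 from by ring,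
          show (s:ℤ)+1-((s:ℤ)+1+(t:ℤ))-1 = -(t:ℤ)-1 from by ring]
        linear_combination (B ^ (-(t:ℤ) - 1) * F (s+1)) * hc
      · rw [if_neg hs, add_zero]
        have hr1 : s = k := by omega
        subst hr1
        simp [Nat.sub_self, Nat.succ_sub_one]
  symm
  rw [Finset.sum_congr rfl hsplit]
  rw [Finset.sum_add_distrib, Finset.sum_range_succ' _ (k+1), Finset.sum_range_succ _ (k+1)]
  rw [if_pos rfl, if_neg (by omega : ¬ (k+1 ≤ k)), add_zero, add_zero]
  rw [Finset.sum_add_distrib]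
  congr 1
  · apply Finset.sum_congr rfl
    intro r hr
    rw [if_neg (Nat.succ_ne_zero r), Nat.succ_sub_one]
    push_cast
    rw [show (r:ℤ)+1-(k:ℤ)-1 = (r:ℤ) - (k:ℤ) from by ring]
  · apply Finset.sum_congr rfl
    intro r hr
    simp only [Finset.mem_range] at hr
    rw [if_pos (by omega : r ≤ k)]

/-- equation (56): for `l ∈ ℤ`, `k ∈ ℕ` and holomorphic `f` on `ℍ`,
`R_l^k(f) = Σ_{r=0}^k (−1)^{k−r} C(k,r) (l+r)_{k−r} (4πy)^{r−k} f^{(r)}`,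
with `(a)_m` the Pochhammer symbol. -/
theorem stmt11 (l : ℤ) (k : ℕ) (f : ℂ → ℂ) (hf : DifferentiableOn ℂ f UHP) :
    ∀ τ ∈ UHP,
      Riter l k f τ
        = ∑ r ∈ Finset.range (k + 1),
            (-1 : ℂ) ^ (k - r) * (Nat.choose k r : ℂ) *
              (∏ i ∈ Finset.range (k - r), (((l : ℂ) + (r : ℂ)) + (i : ℂ))) *
              (4 * (π : ℂ) * (τ.im : ℂ)) ^ ((r : ℤ) - (k : ℤ)) * fder r f τ := by
  induction k with
  | zero =>
    intro τ hτ
    rw [Finset.sum_range_one]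
    simp [Riter, fder]
  | succ k ih =>
    intro τ hτ
    have hEv : Riter l k f =ᶠ[nhds τ]
        (fun u => ∑ r ∈ Finset.range (k + 1),
            (-1 : ℂ) ^ (k - r) * (Nat.choose k r : ℂ) *
              (∏ i ∈ Finset.range (k - r), (((l : ℂ) + (r : ℂ)) + (i : ℂ))) *
              (4 * (π : ℂ) * (u.im : ℂ)) ^ ((r : ℤ) - (k : ℤ)) * fder r f u) :=
      Filter.eventuallyEq_of_mem (isOpen_UHP.mem_nhds hτ) (fun u hu => ih u hu)
    have hterm_diff : ∀ r ∈ Finset.range (k+1),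
        DifferentiableAt ℝ (fun u : ℂ =>
          (-1 : ℂ) ^ (k - r) * (Nat.choose k r : ℂ) *
            (∏ i ∈ Finset.range (k - r), (((l : ℂ) + (r : ℂ)) + (i : ℂ))) *
            (4 * (π : ℂ) * (u.im : ℂ)) ^ ((r : ℤ) - (k : ℤ)) * fder r f u) τ := by
      intro r hr
      have hy : τ.im ≠ 0 := ne_of_gt hτ
      have hfun : (fun u : ℂ =>
          (-1 : ℂ) ^ (k - r) * (Nat.choose k r : ℂ) *
            (∏ i ∈ Finset.range (k - r), (((l : ℂ) + (r : ℂ)) + (i : ℂ))) *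
            (4 * (π : ℂ) * (u.im : ℂ)) ^ ((r : ℤ) - (k : ℤ)) * fder r f u)
          = fun u => ((-1 : ℂ) ^ (k - r) * (Nat.choose k r : ℂ) *
            (∏ i ∈ Finset.range (k - r), (((l : ℂ) + (r : ℂ)) + (i : ℂ))) *
            (4*(π:ℂ))^((r : ℤ) - (k : ℤ))) * (((u.im:ℝ):ℂ)^((r : ℤ) - (k : ℤ)) * fder r f u) := by
        funext u; rw [mul_zpow]; ring
      rw [hfun]
      exact (((diff_impow _ hy).differentiableAt.mul
        ((diffC_fder hf r hτ).restrictScalars ℝ)).const_mul _)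
    have h1 : Riter l (k+1) f τ
        = ∑ r ∈ Finset.range (k+1),
            (1 / (2 * (π:ℂ) * I)) *
              (dtau (fun u => (-1 : ℂ) ^ (k - r) * (Nat.choose k r : ℂ) *
                  (∏ i ∈ Finset.range (k - r), (((l : ℂ) + (r : ℂ)) + (i : ℂ))) *
                  (4 * (π : ℂ) * (u.im : ℂ)) ^ ((r : ℤ) - (k : ℤ)) * fder r f u) τ
                + ((l + 2*(k:ℤ) : ℤ) : ℂ) *
                  ((-1 : ℂ) ^ (k - r) * (Nat.choose k r : ℂ) *
                    (∏ i ∈ Finset.range (k - r), (((l : ℂ) + (r : ℂ)) + (i : ℂ))) *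
                    (4 * (π : ℂ) * (τ.im : ℂ)) ^ ((r : ℤ) - (k : ℤ)) * fder r f τ)
                  / (τ - (starRingEnd ℂ) τ)) := by
      show Rop (l + 2 * (k:ℤ)) (Riter l k f) τ = _
      simp only [Rop]
      rw [dtau_congr hEv, ih τ hτ, dtau_sum hterm_diff]
      rw [Finset.mul_sum, Finset.sum_div, ← Finset.sum_add_distrib, Finset.mul_sum]
    rw [h1]
    have h2 : ∀ r ∈ Finset.range (k+1),
        (1 / (2 * (π:ℂ) * I)) *
          (dtau (fun u => (-1 : ℂ) ^ (k - r) * (Nat.choose k r : ℂ) *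
              (∏ i ∈ Finset.range (k - r), (((l : ℂ) + (r : ℂ)) + (i : ℂ))) *
              (4 * (π : ℂ) * (u.im : ℂ)) ^ ((r : ℤ) - (k : ℤ)) * fder r f u) τ
            + ((l + 2*(k:ℤ) : ℤ) : ℂ) *
              ((-1 : ℂ) ^ (k - r) * (Nat.choose k r : ℂ) *
                (∏ i ∈ Finset.range (k - r), (((l : ℂ) + (r : ℂ)) + (i : ℂ))) *
                (4 * (π : ℂ) * (τ.im : ℂ)) ^ ((r : ℤ) - (k : ℤ)) * fder r f τ)
              / (τ - (starRingEnd ℂ) τ))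
        = ((-1 : ℂ) ^ (k - r) * (Nat.choose k r : ℂ) *
              (∏ i ∈ Finset.range (k - r), (((l : ℂ) + (r : ℂ)) + (i : ℂ)))) *
            (4 * (π : ℂ) * (τ.im : ℂ)) ^ ((r : ℤ) - (k : ℤ)) * fder (r+1) f τ
          + (-((((l + 2*(k:ℤ) : ℤ)):ℂ) + (((r:ℤ) - (k:ℤ) : ℤ) : ℂ))) *
              ((-1 : ℂ) ^ (k - r) * (Nat.choose k r : ℂ) *
                (∏ i ∈ Finset.range (k - r), (((l : ℂ) + (r : ℂ)) + (i : ℂ)))) *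
              (4 * (π : ℂ) * (τ.im : ℂ)) ^ ((r : ℤ) - (k : ℤ) - 1) * fder r f τ := by
      intro r hr
      exact perterm hf hτ _ r ((r:ℤ) - (k:ℤ)) (l + 2*(k:ℤ))
    rw [Finset.sum_congr rfl h2]
    have h3 := stepsum l k (4 * (π : ℂ) * (τ.im : ℂ)) (fun r => fder r f τ)
    push_cast at h3 ⊢
    simp only [show ∀ r : ℕ, (r:ℤ) - ((k:ℤ)+1) = (r:ℤ) - (k:ℤ) - 1 from fun r => by ring]
    exact h3
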